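/- Let λ > 0, c > 0 and define F(u,t) = ∑_{k=0}^∞ (λ/(2c))^{2k} (c²t² − u²)^k / (k!)². Then for all (u,t) with t > 0 and |u| < ct, F satisfies the Klein–Gordon-type equation ∂²F/∂t² − c² ∂²F/∂u² = λ² F; equivalently ∂²F/∂t² = c² ∂²F/∂u² + λ² F. -/

import Mathlib

/-- `F(u,t) = ∑_{k=0}^∞ (λ/(2c))^{2k} (c²t² − u²)^k / (k!)²`,
which equals `I₀((λ/c)√(c²t² − u²))` for `|u| ≤ ct`. -/
noncomputable def F (lam c u t : ℝ) : ℝ :=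
  ∑' k : ℕ, (lam / (2 * c)) ^ (2 * k) * (c ^ 2 * t ^ 2 - u ^ 2) ^ k /
    ((Nat.factorial k : ℝ)) ^ 2

namespace KGaux

/-- Summability of power series with factorially decaying coefficients. -/
lemma summable_factBound (C A x : ℝ) (e : ℕ → ℝ)
    (hb : ∀ k, |e k| ≤ C * A ^ k / (Nat.factorial k : ℝ)) :
    Summable (fun k => e k * x ^ k) := by
  refine Summable.of_norm (Summable.of_nonneg_of_le (fun k => norm_nonneg _) (fun k => ?_)
    (((Real.summable_pow_div_factorial (A * |x|)).mul_left C)))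
  have h1 : ‖e k * x ^ k‖ = |e k| * |x| ^ k := by
    rw [Real.norm_eq_abs, abs_mul, abs_pow]
  rw [h1]
  have h2 : |e k| * |x| ^ k ≤ (C * A ^ k / (Nat.factorial k : ℝ)) * |x| ^ k :=
    mul_le_mul_of_nonneg_right (hb k) (by positivity)
  refine h2.trans (le_of_eq ?_)
  rw [mul_pow]
  ring

lemma hasDerivAt_tsum_pow (C A : ℝ) (hC : 0 ≤ C) (hA : 0 ≤ A) (e : ℕ → ℝ)
    (hb : ∀ k, |e k| ≤ C * A ^ k / (Nat.factorial k : ℝ)) (x : ℝ) :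
    HasDerivAt (fun y => ∑' k : ℕ, e k * y ^ k)
      (∑' k : ℕ, ((k : ℝ) + 1) * e (k + 1) * x ^ k) x := by
  set R : ℝ := |x| + 1 with hR
  have hR1 : (1 : ℝ) ≤ R := le_add_of_nonneg_left (abs_nonneg x)
  have hR0 : (0 : ℝ) < R := by positivity
  set u : ℕ → ℝ := fun n => C * (2 * A * R) ^ n / (Nat.factorial n : ℝ) with hu_def
  have hu : Summable u := by
    simpa [hu_def, mul_div_assoc] using (Real.summable_pow_div_factorial (2 * A * R)).mul_left C
  have hbound : ∀ (n : ℕ) (y : ℝ), y ∈ Metric.ball (0 : ℝ) R →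
      ‖e n * ((n : ℝ) * y ^ (n - 1))‖ ≤ u n := by
    intro n y hy
    have hyR : |y| ≤ R := by
      have := Metric.mem_ball.1 hy
      simp only [Real.dist_eq, sub_zero] at this
      exact this.le
    have h1 : ‖e n * ((n : ℝ) * y ^ (n - 1))‖ = |e n| * ((n : ℝ) * |y| ^ (n - 1)) := by
      rw [Real.norm_eq_abs, abs_mul, abs_mul, abs_pow, Nat.abs_cast]
    rw [h1]
    have h2 : |e n| * ((n : ℝ) * |y| ^ (n - 1)) ≤
        (C * A ^ n / (Nat.factorial n : ℝ)) * ((n : ℝ) * R ^ (n - 1)) := by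
      have hyRn : |y| ^ (n - 1) ≤ R ^ (n - 1) := pow_le_pow_left₀ (abs_nonneg y) hyR _
      have : (n : ℝ) * |y| ^ (n - 1) ≤ (n : ℝ) * R ^ (n - 1) :=
        mul_le_mul_of_nonneg_left hyRn (Nat.cast_nonneg n)
      exact mul_le_mul (hb n) this (by positivity) (by positivity)
    refine h2.trans ?_
    have h3 : (n : ℝ) * R ^ (n - 1) ≤ 2 ^ n * R ^ n := by
      have hn2 : (n : ℝ) ≤ 2 ^ n := by
        exact_mod_cast (Nat.lt_two_pow_self (n := n)).le
      have hRn : R ^ (n - 1) ≤ R ^ n := pow_le_pow_right₀ hR1 (Nat.sub_le n 1)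
      exact mul_le_mul hn2 hRn (by positivity) (by positivity)
    have h4 : (C * A ^ n / (Nat.factorial n : ℝ)) * ((n : ℝ) * R ^ (n - 1)) ≤
        (C * A ^ n / (Nat.factorial n : ℝ)) * (2 ^ n * R ^ n) :=
      mul_le_mul_of_nonneg_left h3 (by positivity)
    refine h4.trans (le_of_eq ?_)
    simp only [hu_def]
    rw [mul_pow, mul_pow]
    ring
  have hD := hasDerivAt_tsum_of_isPreconnected hu (Metric.isOpen_ball)
    ((convex_ball (0:ℝ) R).isPreconnected)
    (g := fun n y => e n * y ^ n) (g' := fun n y => e n * ((n : ℝ) * y ^ (n - 1)))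
    (fun n y _ => (hasDerivAt_pow n y).const_mul (e n))
    hbound (y₀ := x) (by simp [Real.dist_eq, hR0, abs_nonneg]; linarith [abs_nonneg x])
    (summable_factBound C A x e hb)
    (y := x) (by simp [Real.dist_eq]; linarith [abs_nonneg x])
  have hxmem : x ∈ Metric.ball (0 : ℝ) R := by
    simp [Real.dist_eq]; linarith [abs_nonneg x]
  have hsum : Summable (fun n : ℕ => e n * ((n : ℝ) * x ^ (n - 1))) :=
    Summable.of_norm (Summable.of_nonneg_of_le (fun n => norm_nonneg _)
      (fun n => hbound n x hxmem) hu)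
  have hshift : (∑' n : ℕ, e n * ((n : ℝ) * x ^ (n - 1))) =
      ∑' k : ℕ, ((k : ℝ) + 1) * e (k + 1) * x ^ k := by
    rw [hsum.tsum_eq_zero_add]
    have h0 : e 0 * ((0:ℕ) * x ^ (0 - 1)) = 0 := by simp
    rw [h0, zero_add]
    refine tsum_congr fun k => ?_
    push_cast
    ring
  rwa [hshift] at hD

noncomputable def S (e : ℕ → ℝ) (x : ℝ) : ℝ := ∑' k : ℕ, e k * x ^ k

noncomputable def e0 (b : ℝ) (k : ℕ) : ℝ := b ^ k / (Nat.factorial k : ℝ) ^ 2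
noncomputable def e1 (b : ℝ) (k : ℕ) : ℝ := ((k : ℝ) + 1) * e0 b (k + 1)
noncomputable def e2 (b : ℝ) (k : ℕ) : ℝ := ((k : ℝ) + 1) * e1 b (k + 1)

lemma fact_pos' (k : ℕ) : (0:ℝ) < (Nat.factorial k : ℝ) := by
  exact_mod_cast k.factorial_pos

lemma fact_one_le (k : ℕ) : (1:ℝ) ≤ (Nat.factorial k : ℝ) := by
  exact_mod_cast k.factorial_pos

lemma e1_eq (b : ℝ) (k : ℕ) :
    e1 b k = b * b ^ k / (((k : ℝ) + 1) * (Nat.factorial k : ℝ) ^ 2) := by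
  have hk : ((k : ℝ) + 1) ≠ 0 := by positivity
  have hf : (Nat.factorial k : ℝ) ≠ 0 := (fact_pos' k).ne'
  simp only [e1, e0, Nat.factorial_succ]
  push_cast
  field_simp
  ring

lemma e2_eq (b : ℝ) (k : ℕ) :
    e2 b k = b ^ 2 * b ^ k / ((((k : ℝ) + 1) * ((k : ℝ) + 2)) * (Nat.factorial k : ℝ) ^ 2) := by
  have hk1 : ((k : ℝ) + 1) ≠ 0 := by positivity
  have hk2 : ((k : ℝ) + 2) ≠ 0 := by positivity
  have hf : (Nat.factorial k : ℝ) ≠ 0 := (fact_pos' k).ne'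
  simp only [e2, e1, e0, Nat.factorial_succ]
  push_cast
  field_simp
  ring

lemma e0_bound (b : ℝ) (hb : 0 ≤ b) (k : ℕ) :
    |e0 b k| ≤ 1 * b ^ k / (Nat.factorial k : ℝ) := by
  have hf := fact_one_le k
  rw [e0, abs_of_nonneg (by positivity), one_mul]
  gcongr
  exact le_self_pow₀ (fact_one_le k) two_ne_zero

lemma e1_bound (b : ℝ) (hb : 0 ≤ b) (k : ℕ) :
    |e1 b k| ≤ b * b ^ k / (Nat.factorial k : ℝ) := by
  have hf := fact_one_le k
  rw [e1_eq, abs_of_nonneg (by positivity)]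
  gcongr
  nlinarith [sq_nonneg ((Nat.factorial k : ℝ) - 1), Nat.cast_nonneg (α := ℝ) k]

lemma e2_bound (b : ℝ) (hb : 0 ≤ b) (k : ℕ) :
    |e2 b k| ≤ b ^ 2 * b ^ k / (Nat.factorial k : ℝ) := by
  have hf := fact_one_le k
  rw [e2_eq, abs_of_nonneg (by positivity)]
  gcongr
  have h1 : (Nat.factorial k : ℝ) ≤ (Nat.factorial k : ℝ) ^ 2 := le_self_pow₀ hf two_ne_zero
  have h2 : (1:ℝ) ≤ ((k : ℝ) + 1) * ((k : ℝ) + 2) := by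
    nlinarith [Nat.cast_nonneg (α := ℝ) k]
  calc (Nat.factorial k : ℝ) ≤ (Nat.factorial k : ℝ) ^ 2 := h1
    _ = 1 * (Nat.factorial k : ℝ) ^ 2 := (one_mul _).symm
    _ ≤ ((k : ℝ) + 1) * ((k : ℝ) + 2) * (Nat.factorial k : ℝ) ^ 2 :=
        mul_le_mul_of_nonneg_right h2 (by positivity)

lemma summable_e0 (b : ℝ) (hb : 0 ≤ b) (x : ℝ) : Summable (fun k => e0 b k * x ^ k) :=
  summable_factBound 1 b x _ (e0_bound b hb)

lemma summable_e1 (b : ℝ) (hb : 0 ≤ b) (x : ℝ) : Summable (fun k => e1 b k * x ^ k) :=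
  summable_factBound b b x _ (e1_bound b hb)

lemma hasDerivAt_S0 (b : ℝ) (hb : 0 ≤ b) (x : ℝ) :
    HasDerivAt (S (e0 b)) (S (e1 b) x) x :=
  hasDerivAt_tsum_pow 1 b zero_le_one hb (e0 b) (e0_bound b hb) x

lemma hasDerivAt_S1 (b : ℝ) (hb : 0 ≤ b) (x : ℝ) :
    HasDerivAt (S (e1 b)) (S (e2 b) x) x :=
  hasDerivAt_tsum_pow b b hb hb (e1 b) (e1_bound b hb) x

lemma rec1 (b : ℝ) (k : ℕ) : b * e0 b k = ((k : ℝ) + 1) * e1 b k := by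
  have hk : ((k : ℝ) + 1) ≠ 0 := by positivity
  have hf : (Nat.factorial k : ℝ) ≠ 0 := (fact_pos' k).ne'
  rw [e1_eq, e0]
  field_simp

lemma ode_identity (b : ℝ) (hb : 0 ≤ b) (x : ℝ) :
    b * S (e0 b) x = x * S (e2 b) x + S (e1 b) x := by
  have hA : Summable (fun k => b * (e0 b k * x ^ k)) := (summable_e0 b hb x).mul_left b
  have hB := summable_e1 b hb x
  have hterm : ∀ k : ℕ, b * (e0 b k * x ^ k) - e1 b k * x ^ k = (k : ℝ) * e1 b k * x ^ k := by
    intro k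
    have h := rec1 b k
    linear_combination x ^ k * h
  have hC : Summable (fun k : ℕ => (k : ℝ) * e1 b k * x ^ k) := by
    refine (hA.sub hB).congr fun k => hterm k
  have h1 : b * S (e0 b) x - S (e1 b) x = ∑' k : ℕ, (k : ℝ) * e1 b k * x ^ k := by
    rw [S, S, ← tsum_mul_left, ← hA.tsum_sub hB]
    exact tsum_congr hterm
  have h2 : (∑' k : ℕ, (k : ℝ) * e1 b k * x ^ k) = x * S (e2 b) x := by
    rw [hC.tsum_eq_zero_add]
    have h0 : ((0:ℕ) : ℝ) * e1 b 0 * x ^ 0 = 0 := by simp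
    rw [h0, zero_add]
    have h3 : ∀ k : ℕ, ((k+1 : ℕ) : ℝ) * e1 b (k+1) * x ^ (k+1) = e2 b k * x ^ k * x := by
      intro k
      rw [e2]
      push_cast
      ring
    rw [tsum_congr h3, tsum_mul_right]
    rw [S]; ring
  linarith [h1, h2]

end KGaux

theorem F_satisfies_klein_gordon
    (lam c : ℝ) (hlam : 0 < lam) (hc : 0 < c) :
    ∀ u t : ℝ, 0 < t → |u| < c * t →
      iteratedDeriv 2 (fun s => F lam c u s) t =
        c ^ 2 * iteratedDeriv 2 (fun v => F lam c v t) u + lam ^ 2 * F lam c u t := by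
  intro u t ht hut
  open KGaux in
  set b : ℝ := (lam / (2 * c)) ^ 2 with hbdef
  have hb : 0 ≤ b := sq_nonneg _
  have hFeq : ∀ v s : ℝ, F lam c v s = S (e0 b) (c ^ 2 * s ^ 2 - v ^ 2) := by
    intro v s
    rw [F, S]
    refine tsum_congr fun k => ?_
    rw [e0, hbdef, ← pow_mul]
    ring
  set x : ℝ := c ^ 2 * t ^ 2 - u ^ 2 with hx
  -- t-direction
  have hFt : (fun s => F lam c u s) = fun s => S (e0 b) (c ^ 2 * s ^ 2 - u ^ 2) :=
    funext fun s => hFeq u s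
  have hinner_t : ∀ s : ℝ, HasDerivAt (fun s => c ^ 2 * s ^ 2 - u ^ 2) (c ^ 2 * (2 * s)) s := by
    intro s
    simpa using ((hasDerivAt_pow 2 s).const_mul (c ^ 2)).sub_const (u ^ 2)
  have hd1t : ∀ s : ℝ, HasDerivAt (fun s => F lam c u s)
      (S (e1 b) (c ^ 2 * s ^ 2 - u ^ 2) * (c ^ 2 * (2 * s))) s := by
    intro s
    rw [hFt]
    exact (hasDerivAt_S0 b hb _).comp s (hinner_t s)
  have hderiv_t : deriv (fun s => F lam c u s) =
      fun s => S (e1 b) (c ^ 2 * s ^ 2 - u ^ 2) * (c ^ 2 * (2 * s)) :=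
    funext fun s => (hd1t s).deriv
  have hlin : ∀ s : ℝ, HasDerivAt (fun s : ℝ => c ^ 2 * (2 * s)) (c ^ 2 * 2) s := by
    intro s
    have hfe : (fun s : ℝ => c ^ 2 * (2 * s)) = fun y : ℝ => c ^ 2 * 2 * y :=
      funext fun y => by ring
    rw [hfe]
    simpa using (hasDerivAt_id s).const_mul (c ^ 2 * 2)
  have hd2t : HasDerivAt (fun s => S (e1 b) (c ^ 2 * s ^ 2 - u ^ 2) * (c ^ 2 * (2 * s)))
      (S (e2 b) x * (c ^ 2 * (2 * t)) * (c ^ 2 * (2 * t)) + S (e1 b) x * (c ^ 2 * 2)) t :=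
    HasDerivAt.mul ((hasDerivAt_S1 b hb _).comp t (hinner_t t)) (hlin t)
  have hiter_t : iteratedDeriv 2 (fun s => F lam c u s) t =
      S (e2 b) x * (c ^ 2 * (2 * t)) * (c ^ 2 * (2 * t)) + S (e1 b) x * (c ^ 2 * 2) := by
    rw [show (2:ℕ) = 1 + 1 from rfl, iteratedDeriv_succ, iteratedDeriv_one, hderiv_t]
    exact hd2t.deriv
  -- u-direction
  have hFu : (fun v => F lam c v t) = fun v => S (e0 b) (c ^ 2 * t ^ 2 - v ^ 2) :=
    funext fun v => hFeq v t
  have hinner_u : ∀ v : ℝ, HasDerivAt (fun v => c ^ 2 * t ^ 2 - v ^ 2) (-(2 * v)) v := by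
    intro v
    simpa using (hasDerivAt_pow 2 v).const_sub (c ^ 2 * t ^ 2)
  have hd1u : ∀ v : ℝ, HasDerivAt (fun v => F lam c v t)
      (S (e1 b) (c ^ 2 * t ^ 2 - v ^ 2) * (-(2 * v))) v := by
    intro v
    rw [hFu]
    exact (hasDerivAt_S0 b hb _).comp v (hinner_u v)
  have hderiv_u : deriv (fun v => F lam c v t) =
      fun v => S (e1 b) (c ^ 2 * t ^ 2 - v ^ 2) * (-(2 * v)) :=
    funext fun v => (hd1u v).deriv
  have hlin_u : ∀ v : ℝ, HasDerivAt (fun v : ℝ => -(2 * v)) (-2 : ℝ) v := by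
    intro v
    exact (((hasDerivAt_id v).const_mul (2 : ℝ)).neg).congr_deriv (by norm_num)
  have hd2u : HasDerivAt (fun v => S (e1 b) (c ^ 2 * t ^ 2 - v ^ 2) * (-(2 * v)))
      (S (e2 b) x * (-(2 * u)) * (-(2 * u)) + S (e1 b) x * (-2)) u :=
    HasDerivAt.mul ((hasDerivAt_S1 b hb _).comp u (hinner_u u)) (hlin_u u)
  have hiter_u : iteratedDeriv 2 (fun v => F lam c v t) u =
      S (e2 b) x * (-(2 * u)) * (-(2 * u)) + S (e1 b) x * (-2) := by
    rw [show (2:ℕ) = 1 + 1 from rfl, iteratedDeriv_succ, iteratedDeriv_one, hderiv_u]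
    exact hd2u.deriv
  -- combine
  have hode := ode_identity b hb x
  have hlam2 : lam ^ 2 = 4 * c ^ 2 * b := by
    rw [hbdef]
    field_simp
    ring
  rw [hiter_t, hiter_u, hFeq u t, ← hx]
  linear_combination (-(4 * c ^ 2 * S (e2 b) x)) * hx + (-(4 * c ^ 2)) * hode +
    (-(S (e0 b) x)) * hlam2
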